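/- Let B be a nilpotent n×n matrix over an algebraically closed field with ker(B) ⊆ im(B) (all Jordan blocks of size ≥ 2), and let k be the number of Jordan blocks of B. Then for every i with 0 ≤ i ≤ k there exists a nilpotent matrix A with AB = BA = 0, A² = 0, and rank(A) = i; conversely every A with AB = BA = 0 satisfies A² = 0 and rank(A) ≤ k. -/

import Mathlib

/-- Let `B` be a nilpotent matrix over an algebraically closed field with `ker B ⊆ im B`
(all Jordan blocks of size ≥ 2) and `k = dim ker B` the number of Jordan blocks of `B`.
Then for every `0 ≤ i ≤ k` there is a nilpotent `A` with `AB = BA = 0`, `A² = 0` and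
`rank A = i`; conversely every nilpotent `A` with `AB = BA = 0` satisfies `A² = 0` and
`rank A ≤ k`. -/
theorem stmt3 {F : Type*} [Field F] [IsAlgClosed F] {n : ℕ}
    (B : Matrix (Fin n) (Fin n) F) (hB : IsNilpotent B)
    (hker : LinearMap.ker B.mulVecLin ≤ LinearMap.range B.mulVecLin)
    (k : ℕ) (hk : k = Module.finrank F (LinearMap.ker B.mulVecLin)) :
    (∀ i : ℕ, i ≤ k → ∃ A : Matrix (Fin n) (Fin n) F,
        IsNilpotent A ∧ A * B = 0 ∧ B * A = 0 ∧ A ^ 2 = 0 ∧ A.rank = i) ∧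
    (∀ A : Matrix (Fin n) (Fin n) F,
        IsNilpotent A → A * B = 0 → B * A = 0 → A ^ 2 = 0 ∧ A.rank ≤ k) := by
  classical
  have hf : Matrix.toLin' B = B.mulVecLin := Matrix.toLin'_apply' B
  have hinj : Function.Injective (Matrix.toLin' : Matrix (Fin n) (Fin n) F ≃ₗ[F] _) :=
    Matrix.toLin'.injective
  constructor
  · intro i hi
    obtain ⟨W, hW⟩ := Submodule.exists_isCompl (LinearMap.range B.mulVecLin)
    have h1 := Submodule.finrank_add_eq_of_isCompl hW
    have h2 := LinearMap.finrank_range_add_finrank_ker B.mulVecLin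
    have hrankW : Module.finrank F W = k := by
      have : Module.finrank F (Fin n → F) = Module.finrank F (Fin n → F) := rfl
      omega
    let bW : Module.Basis (Fin k) F W := Module.finBasisOfFinrankEq F W hrankW
    let bK : Module.Basis (Fin k) F (LinearMap.ker B.mulVecLin) :=
      Module.finBasisOfFinrankEq F (LinearMap.ker B.mulVecLin) hk.symm
    let v : Fin k → (Fin n → F) := fun j => if (j : ℕ) < i then (bK j : Fin n → F) else 0
    let u : W →ₗ[F] (Fin n → F) := Module.Basis.constr bW F v
    let π : (Fin n → F) →ₗ[F] W :=
      Submodule.linearProjOfIsCompl W (LinearMap.range B.mulVecLin) hW.symm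
    let g : (Fin n → F) →ₗ[F] (Fin n → F) := u.comp π
    have hkerg : LinearMap.range B.mulVecLin ≤ LinearMap.ker g := by
      rw [show LinearMap.range B.mulVecLin = LinearMap.ker π from
        (Submodule.linearProjOfIsCompl_ker hW.symm).symm]
      exact LinearMap.ker_le_ker_comp π u
    have hrangeu : LinearMap.range u = Submodule.span F (Set.range v) :=
      Module.Basis.constr_range bW F
    have hrangeg : LinearMap.range g = Submodule.span F (Set.range v) := by
      rw [← hrangeu]
      exact LinearMap.range_comp_of_range_eq_top u
        (Submodule.linearProjOfIsCompl_range hW.symm)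
    have hrangeK : LinearMap.range g ≤ LinearMap.ker B.mulVecLin := by
      rw [hrangeg, Submodule.span_le]
      rintro x ⟨j, rfl⟩
      by_cases h : (j : ℕ) < i
      · simpa [v, h] using (bK j).2
      · simp [v, h]
    refine ⟨LinearMap.toMatrix' g, ?_, ?_, ?_, ?_, ?_⟩
    case _ =>
      refine ⟨2, hinj ?_⟩
      rw [pow_two, Matrix.toLin'_mul, Matrix.toLin'_toMatrix', map_zero]
      exact LinearMap.range_le_ker_iff.mp (hrangeK.trans (hker.trans hkerg))
    case _ =>
      apply hinj
      rw [Matrix.toLin'_mul, Matrix.toLin'_toMatrix', map_zero, hf]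
      exact LinearMap.range_le_ker_iff.mp hkerg
    case _ =>
      apply hinj
      rw [Matrix.toLin'_mul, Matrix.toLin'_toMatrix', map_zero, hf]
      exact LinearMap.range_le_ker_iff.mp hrangeK
    case _ =>
      apply hinj
      rw [pow_two, Matrix.toLin'_mul, Matrix.toLin'_toMatrix', map_zero]
      exact LinearMap.range_le_ker_iff.mp (hrangeK.trans (hker.trans hkerg))
    case _ =>
      have hmv : (LinearMap.toMatrix' g).mulVecLin = g := by
        rw [← Matrix.toLin'_apply', Matrix.toLin'_toMatrix']
      rw [Matrix.rank, hmv, hrangeg]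
      let e : Fin i → (Fin n → F) := fun j => (bK (Fin.castLE hi j) : Fin n → F)
      have hspan : Submodule.span F (Set.range v) = Submodule.span F (Set.range e) := by
        apply le_antisymm
        · rw [Submodule.span_le]
          rintro x ⟨j, rfl⟩
          by_cases h : (j : ℕ) < i
          · exact Submodule.subset_span ⟨⟨j, h⟩, by simp [e, v, h, Fin.castLE]⟩
          · simp [v, h]
        · rw [Submodule.span_le]
          rintro x ⟨j, rfl⟩
          exact Submodule.subset_span ⟨Fin.castLE hi j, by simp [e, v, j.2]⟩
      have hli : LinearIndependent F e := by
        have h1 : LinearIndependent F (fun j : Fin k => (bK j : Fin n → F)) :=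
          bK.linearIndependent.map' (LinearMap.ker B.mulVecLin).subtype (Submodule.ker_subtype _)
        exact h1.comp (Fin.castLE hi) (Fin.castLE_injective hi)
      rw [hspan, finrank_span_eq_card hli, Fintype.card_fin]
  · intro A _ hAB hBA
    have h1 : LinearMap.range A.mulVecLin ≤ LinearMap.ker B.mulVecLin := by
      rintro x ⟨y, rfl⟩
      have h : B.mulVecLin (A.mulVecLin y) = (B * A).mulVecLin y := by
        rw [Matrix.mulVecLin_mul]; rfl
      simp only [LinearMap.mem_ker, h, hBA, Matrix.mulVecLin_zero, LinearMap.zero_apply]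
    have h2 : LinearMap.range B.mulVecLin ≤ LinearMap.ker A.mulVecLin := by
      rintro x ⟨y, rfl⟩
      have h : A.mulVecLin (B.mulVecLin y) = (A * B).mulVecLin y := by
        rw [Matrix.mulVecLin_mul]; rfl
      simp only [LinearMap.mem_ker, h, hAB, Matrix.mulVecLin_zero, LinearMap.zero_apply]
    constructor
    · apply hinj
      rw [pow_two, Matrix.toLin'_mul, map_zero, Matrix.toLin'_apply']
      exact LinearMap.range_le_ker_iff.mp (h1.trans (hker.trans h2))
    · rw [Matrix.rank, hk]
      exact Submodule.finrank_mono h1
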